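/- arXiv:1905.07519 — 6 statements merged into one kernel-verified Lean document; each statement's English description precedes it below -/
import Mathlib

section
/- Suppose the Robin-type coupling conditions (C̃2), (C̃3), (C̃4) hold at Global-Local iteration k. If u_Γ^{k,1/2} = u_Γ^k, then the Global-Local formulation is converged, i.e. the original coupling conditions hold: λ_C^k + λ_L^k = 0 (weak continuity of interface tractions), u_Γ^k = u_G^k, and u_Γ^k = u_L^k (weak continuity of interface displacements). -/
open scoped InnerProductSpace

/-- If the Robin-type coupling conditions (C̃2), (C̃3), (C̃4) hold at
Global-Local iteration `k` and `u_Γ^{k,1/2} = u_Γ^k`, then the Global-Local formulation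
is converged: weak continuity of the interface tractions `λ_C^k + λ_L^k = 0` and weak
continuity of the interface displacements `u_Γ^k = u_G^k` and `u_Γ^k = u_L^k`. -/
theorem globalLocal_converged_of_interface_displacement_match
    {H : Type*} [NormedAddCommGroup H] [InnerProductSpace ℝ H]
    (A_G A_L : H →ₗ[ℝ] H)
    (lamC_km1 lamC_k lamL_k uG_km1 uG_k uL_k uGammaHalf_k uGamma_k : H)
    -- (C̃2)
    (hC2 : uGammaHalf_k = uL_k)
    -- (C̃3)
    (hC3 : ∀ v : H, ⟪lamC_k, v⟫_ℝ + ⟪A_G uGamma_k, v⟫_ℝ = ⟪A_G uL_k, v⟫_ℝ - ⟪lamL_k, v⟫_ℝ)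
    -- (C̃4)
    (hC4 : uGammaHalf_k = uG_k)
    -- hypothesis: u_Γ^{k,1/2} = u_Γ^k
    (hmatch : uGammaHalf_k = uGamma_k) :
    (∀ v : H, ⟪lamC_k, v⟫_ℝ + ⟪lamL_k, v⟫_ℝ = 0) ∧ uGamma_k = uG_k ∧ uGamma_k = uL_k := by
  have huL : uGamma_k = uL_k := hmatch ▸ hC2
  refine ⟨fun v => ?_, hmatch ▸ hC4, huL⟩
  have := hC3 v
  rw [huL] at this
  linarith
end

section
/- Suppose the Robin-type coupling conditions (C̃1), (C̃2), (C̃3), (C̃4) hold at Global-Local iteration k and the global augmented interface stiffness operator A_G is injective. If ΔΛ_L = 0 (the local Robin right-hand side is unchanged between iterations k−1 and k), then u_Γ^k = u_Γ^{k,1/2}. -/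
open scoped InnerProductSpace

/-- If the Robin-type coupling conditions (C̃1)-(C̃4) hold at Global-Local
iteration `k`, the global augmented interface stiffness operator `A_G` is injective, and
`ΔΛ_L = 0` (the local Robin right-hand side is unchanged between iterations `k-1` and `k`),
then `u_Γ^k = u_Γ^{k,1/2}`. -/
theorem interface_displacement_match_of_deltaLambdaL_eq_zero
    {H : Type*} [NormedAddCommGroup H] [InnerProductSpace ℝ H]
    (A_G A_L : H →ₗ[ℝ] H) (hAG : Function.Injective A_G)
    (lamC_km1 lamC_k lamL_k uG_km1 uG_k uL_k uGammaHalf_k uGamma_k : H)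
    -- (C̃1)
    (hC1 : ∀ v : H, ⟪lamL_k, v⟫_ℝ + ⟪A_L uGammaHalf_k, v⟫_ℝ
      = ⟪A_L uG_km1, v⟫_ℝ - ⟪lamC_km1, v⟫_ℝ)
    -- (C̃2)
    (hC2 : uGammaHalf_k = uL_k)
    -- (C̃3)
    (hC3 : ∀ v : H, ⟪lamC_k, v⟫_ℝ + ⟪A_G uGamma_k, v⟫_ℝ = ⟪A_G uL_k, v⟫_ℝ - ⟪lamL_k, v⟫_ℝ)
    -- (C̃4)
    (hC4 : uGammaHalf_k = uG_k)
    -- ΔΛ_L = 0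
    (hDelta : ∀ v : H, ⟪A_L uG_k, v⟫_ℝ - ⟪lamC_k, v⟫_ℝ
      = ⟪A_L uG_km1, v⟫_ℝ - ⟪lamC_km1, v⟫_ℝ) :
    uGamma_k = uGammaHalf_k := by
  apply hAG
  apply ext_inner_right ℝ
  intro v
  have h1 := hC1 v
  have h3 := hC3 v
  have hD := hDelta v
  rw [hC2] at hC4
  rw [hC2] at h1
  rw [← hC4] at hD
  rw [hC2]
  linarith
end

section
/- Suppose the Robin-type coupling conditions (C̃1), (C̃2), (C̃3), (C̃4) hold at Global-Local iteration k. If u_Γ^{k,1/2} = u_Γ^k, then ΔΛ_L = 0, i.e. the local Robin right-hand side is unchanged between iterations k−1 and k. -/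
open scoped InnerProductSpace

/-- If the Robin-type coupling conditions (C̃1)-(C̃4) hold at Global-Local
iteration `k` and `u_Γ^{k,1/2} = u_Γ^k`, then `ΔΛ_L = 0`, i.e. the local Robin right-hand
side is unchanged between iterations `k-1` and `k`. -/
theorem deltaLambdaL_eq_zero_of_interface_displacement_match
    {H : Type*} [NormedAddCommGroup H] [InnerProductSpace ℝ H]
    (A_G A_L : H →ₗ[ℝ] H)
    (lamC_km1 lamC_k lamL_k uG_km1 uG_k uL_k uGammaHalf_k uGamma_k : H)
    -- (C̃1)
    (hC1 : ∀ v : H, ⟪lamL_k, v⟫_ℝ + ⟪A_L uGammaHalf_k, v⟫_ℝ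
      = ⟪A_L uG_km1, v⟫_ℝ - ⟪lamC_km1, v⟫_ℝ)
    -- (C̃2)
    (hC2 : uGammaHalf_k = uL_k)
    -- (C̃3)
    (hC3 : ∀ v : H, ⟪lamC_k, v⟫_ℝ + ⟪A_G uGamma_k, v⟫_ℝ = ⟪A_G uL_k, v⟫_ℝ - ⟪lamL_k, v⟫_ℝ)
    -- (C̃4)
    (hC4 : uGammaHalf_k = uG_k)
    -- hypothesis: u_Γ^{k,1/2} = u_Γ^k
    (hmatch : uGammaHalf_k = uGamma_k) :
    ∀ v : H, ⟪A_L uG_k, v⟫_ℝ - ⟪lamC_k, v⟫_ℝ = ⟪A_L uG_km1, v⟫_ℝ - ⟪lamC_km1, v⟫_ℝ := by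
  intro v
  have h1 := hC1 v
  have h3 := hC3 v
  subst hC2 hC4 hmatch
  linarith
end

section
/- The homogeneous stress response σ(ε) = c·ε/(1 + (l·c/G_c)·ε²)² attains its maximum over ε ∈ [0,∞) exactly at the critical strain ε_c = (√3/3)·√(G_c/(l·c)), this maximizer is unique on [0,∞), and the maximum value is the critical stress σ_c = (3√3/16)·√(G_c·c/l). -/
/-- The homogeneous stress response `σ(ε) = c·ε/(1 + (l·c/G_c)·ε²)²` attains
its maximum over `ε ∈ [0,∞)` exactly at the critical strain
`ε_c = (√3/3)·√(G_c/(l·c))`, this maximizer is unique on `[0,∞)`, and the maximum value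
is the critical stress `σ_c = (3√3/16)·√(G_c·c/l)`. -/
theorem critical_stress_of_homogeneous_phase_field
    (c Gc l : ℝ) (hc : 0 < c) (hGc : 0 < Gc) (hl : 0 < l) :
    let σ : ℝ → ℝ := fun ε => c * ε / (1 + (l * c / Gc) * ε ^ 2) ^ 2
    let εc : ℝ := (Real.sqrt 3 / 3) * Real.sqrt (Gc / (l * c))
    let σc : ℝ := (3 * Real.sqrt 3 / 16) * Real.sqrt (Gc * c / l)
    σ εc = σc ∧ (∀ ε : ℝ, 0 ≤ ε → σ ε ≤ σc) ∧
      (∀ ε : ℝ, 0 ≤ ε → σ ε = σc → ε = εc) := by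
  intro σ εc σc
  set s3 := Real.sqrt 3 with hs3def
  set q := Real.sqrt (Gc / (l * c)) with hqdef
  have hs3 : s3 ^ 2 = 3 := Real.sq_sqrt (by norm_num)
  have hs3pos : 0 < s3 := Real.sqrt_pos.mpr (by norm_num)
  have hlc : 0 < l * c := mul_pos hl hc
  have hq2 : q ^ 2 = Gc / (l * c) := Real.sq_sqrt (le_of_lt (div_pos hGc hlc))
  have hqpos : 0 < q := Real.sqrt_pos.mpr (div_pos hGc hlc)
  have hr : Real.sqrt (Gc * c / l) = c * q := by
    have h1 : Gc * c / l = c ^ 2 * (Gc / (l * c)) := by field_simp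
    rw [h1, Real.sqrt_mul (sq_nonneg c), Real.sqrt_sq hc.le]
  have hkey : l * c * q ^ 2 = Gc := by
    rw [hq2]; field_simp
  have hσc : σc = 3 * s3 / 16 * (c * q) := by
    simp only [σc, hr]; rfl
  have hεc : εc = s3 / 3 * q := rfl
  have hfrac : l * c / Gc = 1 / q ^ 2 := by
    rw [← hkey]; field_simp
  -- key factorization identity
  have hident : ∀ ε : ℝ, 3 * s3 * (q ^ 2 + ε ^ 2) ^ 2 - 16 * ε * q ^ 3
      = 3 * s3 * ((ε - s3 / 3 * q) ^ 2
        * (ε ^ 2 + 2 * (s3 / 3 * q) * ε + 9 * (s3 / 3 * q) ^ 2)) := by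
    intro ε
    linear_combination (-2 * s3 * q ^ 2 * ε ^ 2 + 16 / 9 * (s3 ^ 2 + 3) * q ^ 3 * ε
      - s3 / 3 * (s3 ^ 2 + 3) * q ^ 4) * hs3
  have hden : ∀ ε : ℝ, 1 + l * c / Gc * ε ^ 2 = (q ^ 2 + ε ^ 2) / q ^ 2 := by
    intro ε; rw [hfrac]; field_simp
  have hdiff : ∀ ε : ℝ, 3 * s3 / 16 * (c * q) * ((q ^ 2 + ε ^ 2) / q ^ 2) ^ 2 - c * ε
      = c / (16 * q ^ 3) * (3 * s3 * (q ^ 2 + ε ^ 2) ^ 2 - 16 * ε * q ^ 3) := by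
    intro ε; field_simp
  refine ⟨?_, ?_, ?_⟩
  · -- value at εc
    show c * εc / (1 + l * c / Gc * εc ^ 2) ^ 2 = σc
    rw [hσc, hεc, hden]
    have hz : 3 * s3 * (q ^ 2 + (s3 / 3 * q) ^ 2) ^ 2 - 16 * (s3 / 3 * q) * q ^ 3 = 0 := by
      rw [hident]; ring
    have h4 : (q ^ 2 + (s3 / 3 * q) ^ 2) = 4 / 3 * q ^ 2 := by
      linear_combination q ^ 2 / 9 * hs3
    rw [h4]
    have h5 : 4 / 3 * q ^ 2 / q ^ 2 = 4 / 3 := by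
      field_simp
    rw [h5, div_eq_iff (by positivity)]
    ring
  · intro ε hε
    show c * ε / (1 + l * c / Gc * ε ^ 2) ^ 2 ≤ σc
    rw [hσc, hden, div_le_iff₀ (by positivity)]
    have hnn : 0 ≤ 3 * s3 * (q ^ 2 + ε ^ 2) ^ 2 - 16 * ε * q ^ 3 := by
      rw [hident]; positivity
    have := hdiff ε
    nlinarith [mul_nonneg (by positivity : (0:ℝ) ≤ c / (16 * q ^ 3)) hnn]
  · intro ε hε heq
    have heq' : c * ε / (1 + l * c / Gc * ε ^ 2) ^ 2 = σc := heq
    rw [hσc, hden, div_eq_iff (by positivity)] at heq'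
    have hz : c / (16 * q ^ 3) * (3 * s3 * (q ^ 2 + ε ^ 2) ^ 2 - 16 * ε * q ^ 3) = 0 := by
      rw [← hdiff ε]; linarith [heq']
    have hz2 : 3 * s3 * (q ^ 2 + ε ^ 2) ^ 2 - 16 * ε * q ^ 3 = 0 :=
      (mul_eq_zero.mp hz).resolve_left (by positivity)
    rw [hident ε] at hz2
    have hz3 : (ε - s3 / 3 * q) ^ 2 * (ε ^ 2 + 2 * (s3 / 3 * q) * ε + 9 * (s3 / 3 * q) ^ 2) = 0 :=
      (mul_eq_zero.mp hz2).resolve_left (by positivity)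
    have hquad : 0 < ε ^ 2 + 2 * (s3 / 3 * q) * ε + 9 * (s3 / 3 * q) ^ 2 := by
      have h1 : 0 < 9 * (s3 / 3 * q) ^ 2 := by positivity
      have h2 : 0 ≤ 2 * (s3 / 3 * q) * ε := by positivity
      nlinarith [sq_nonneg ε]
    have hsq : (ε - s3 / 3 * q) ^ 2 = 0 :=
      (mul_eq_zero.mp hz3).resolve_right hquad.ne'
    have := pow_eq_zero_iff (n := 2) (by norm_num) |>.mp hsq
    have : ε = s3 / 3 * q := by linarith [sub_eq_zero.mp this]
    rw [hεc]; exact this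
end

section
/- For every matrix ε, the transversely isotropic free energy Ψ(ε) = (λ/2)(tr ε)² + μ·tr(ε²) + (χ/2)(tr(ε·M))² + 2Ξ·tr(ε²·M) is Fréchet differentiable at ε, with derivative given by h ↦ tr(σ(ε)·h), where the constitutive stress tensor is σ(ε) = λ·(tr ε)·I + 2μ·ε + χ·tr(ε·M)·M + 2Ξ·(ε·M + M·ε). -/
open Matrix
attribute [local instance] Matrix.normedAddCommGroup Matrix.normedSpace

noncomputable def Tm {n : ℕ} (M : Matrix (Fin n) (Fin n) ℝ) :
    Matrix (Fin n) (Fin n) ℝ →L[ℝ] ℝ :=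
  LinearMap.toContinuousLinearMap
    { toFun := fun A => (A * M).trace
      map_add' := by intro A B; simp [Matrix.add_mul]
      map_smul' := by intro r A; simp [Matrix.smul_mul] }

@[simp] lemma Tm_apply {n : ℕ} (M A : Matrix (Fin n) (Fin n) ℝ) : Tm M A = (A * M).trace := rfl

noncomputable def Bm {n : ℕ} (M : Matrix (Fin n) (Fin n) ℝ) :
    Matrix (Fin n) (Fin n) ℝ →L[ℝ] Matrix (Fin n) (Fin n) ℝ →L[ℝ] ℝ :=
  LinearMap.toContinuousLinearMap
    { toFun := fun A => Tm (M * A)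
      map_add' := by intro A B; ext C; simp [Matrix.mul_add, Matrix.add_mul]
      map_smul' := by intro r A; ext C; simp [Matrix.mul_smul, Matrix.smul_mul] }

@[simp] lemma Bm_apply {n : ℕ} (M A C : Matrix (Fin n) (Fin n) ℝ) :
    Bm M A C = (A * C * M).trace := by
  show (C * (M * A)).trace = _
  rw [← Matrix.mul_assoc, Matrix.trace_mul_comm, Matrix.mul_assoc]

/-- The transversely isotropic free energy
`Ψ(ε) = (λ/2)(tr ε)² + μ·tr(ε²) + (χ/2)(tr(ε·M))² + 2Ξ·tr(ε²·M)` is Fréchet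
differentiable at every `ε`, with derivative `h ↦ tr(σ(ε)·h)`, where
`σ(ε) = λ(tr ε)·I + 2μ·ε + χ·tr(ε·M)·M + 2Ξ·(ε·M + M·ε)`. -/
theorem transversely_isotropic_energy_hasFDerivAt
    {n : ℕ} (hn : 1 ≤ n)
    (M : Matrix (Fin n) (Fin n) ℝ) (hM : M.IsSymm)
    (lam mu χ Ξ : ℝ) (ε : Matrix (Fin n) (Fin n) ℝ) :
    ∃ L : Matrix (Fin n) (Fin n) ℝ →L[ℝ] ℝ,
      (∀ h : Matrix (Fin n) (Fin n) ℝ,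
        L h = (((lam * ε.trace) • (1 : Matrix (Fin n) (Fin n) ℝ) + (2 * mu) • ε +
          (χ * (ε * M).trace) • M + (2 * Ξ) • (ε * M + M * ε)) * h).trace) ∧
      HasFDerivAt (fun e : Matrix (Fin n) (Fin n) ℝ =>
        lam / 2 * e.trace ^ 2 + mu * (e * e).trace +
          χ / 2 * ((e * M).trace) ^ 2 + 2 * Ξ * (e * e * M).trace) L ε := by
  have h1 : HasFDerivAt (fun e : Matrix (Fin n) (Fin n) ℝ => lam / 2 * e.trace ^ 2)
      ((lam / 2) • (ε.trace • Tm 1 + ε.trace • Tm (1 : Matrix (Fin n) (Fin n) ℝ))) ε := by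
    have : HasFDerivAt (fun e : Matrix (Fin n) (Fin n) ℝ => Tm 1 e * Tm 1 e)
        (Tm 1 ε • Tm 1 + Tm 1 ε • Tm (1 : Matrix (Fin n) (Fin n) ℝ)) ε :=
      (Tm (1 : Matrix (Fin n) (Fin n) ℝ)).hasFDerivAt.mul (Tm _).hasFDerivAt
    have h := this.const_mul (lam / 2)
    simp only [Tm_apply, Matrix.mul_one, sq] at h ⊢
    exact h
  have h2 : HasFDerivAt (fun e : Matrix (Fin n) (Fin n) ℝ => mu * (e * e).trace)
      (mu • ((Bm 1 ε).comp (ContinuousLinearMap.id ℝ (Matrix (Fin n) (Fin n) ℝ)) + (show Matrix (Fin n) (Fin n) ℝ →L[ℝ] ℝ from (Bm 1).flip ε))) ε := by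
    have : HasFDerivAt (fun e : Matrix (Fin n) (Fin n) ℝ => Bm 1 e e)
        ((Bm 1 ε).comp (ContinuousLinearMap.id ℝ (Matrix (Fin n) (Fin n) ℝ)) + (show Matrix (Fin n) (Fin n) ℝ →L[ℝ] ℝ from (Bm 1).flip ε)) ε :=
      (Bm (1 : Matrix (Fin n) (Fin n) ℝ)).hasFDerivAt.clm_apply (hasFDerivAt_id ε)
    have h := this.const_mul mu
    simp only [Bm_apply, Matrix.mul_one, ContinuousLinearMap.comp_id] at h ⊢
    exact h
  have h3 : HasFDerivAt (fun e : Matrix (Fin n) (Fin n) ℝ => χ / 2 * ((e * M).trace) ^ 2)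
      ((χ / 2) • ((ε * M).trace • Tm M + (ε * M).trace • Tm M)) ε := by
    have : HasFDerivAt (fun e : Matrix (Fin n) (Fin n) ℝ => Tm M e * Tm M e)
        (Tm M ε • Tm M + Tm M ε • Tm M) ε := (Tm M).hasFDerivAt.mul (Tm M).hasFDerivAt
    have h := this.const_mul (χ / 2)
    simp only [Tm_apply, sq] at h ⊢
    exact h
  have h4 : HasFDerivAt (fun e : Matrix (Fin n) (Fin n) ℝ => 2 * Ξ * (e * e * M).trace)
      ((2 * Ξ) • ((Bm M ε).comp (ContinuousLinearMap.id ℝ (Matrix (Fin n) (Fin n) ℝ)) + (show Matrix (Fin n) (Fin n) ℝ →L[ℝ] ℝ from (Bm M).flip ε))) ε := by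
    have : HasFDerivAt (fun e : Matrix (Fin n) (Fin n) ℝ => Bm M e e)
        ((Bm M ε).comp (ContinuousLinearMap.id ℝ (Matrix (Fin n) (Fin n) ℝ)) + (show Matrix (Fin n) (Fin n) ℝ →L[ℝ] ℝ from (Bm M).flip ε)) ε :=
      (Bm M).hasFDerivAt.clm_apply (hasFDerivAt_id ε)
    have h := this.const_mul (2 * Ξ)
    simp only [Bm_apply, ContinuousLinearMap.comp_id] at h ⊢
    exact h
  refine ⟨_, ?_, ((h1.add h2).add h3).add h4⟩
  intro h
  change lam / 2 * (ε.trace * (h * 1).trace + ε.trace * (h * 1).trace) +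
    mu * ((h * (1 * ε)).trace + (ε * (1 * h)).trace) +
    χ / 2 * ((ε * M).trace * (h * M).trace + (ε * M).trace * (h * M).trace) +
    2 * Ξ * ((h * (M * ε)).trace + (ε * (M * h)).trace) = _
  simp only [ContinuousLinearMap.add_apply, ContinuousLinearMap.smul_apply,
    ContinuousLinearMap.coe_comp', Function.comp_apply, ContinuousLinearMap.coe_id', id_eq,
    ContinuousLinearMap.flip_apply, Tm_apply, Bm_apply, smul_eq_mul, Matrix.mul_one,
    Matrix.add_mul, Matrix.smul_mul, Matrix.trace_add, Matrix.trace_smul, Matrix.one_mul,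
    pow_one]
  rw [Matrix.trace_mul_comm h ε, Matrix.trace_mul_comm h M, Matrix.trace_mul_comm h (M * ε),
    ← Matrix.mul_assoc ε M h]
  push_cast
  ring
end

section
/- The additively decomposed isotropic strain-energy function recovers the total isotropic energy: (λ/2)·⟨tr ε⟩₊² + μ·tr((ε⁺)²) + (λ/2)·⟨tr ε⟩₋² + μ·tr((ε⁻)²) = (λ/2)·(tr ε)² + μ·tr(ε²); that is, Ψ^{iso,+}(I₁⁺, I₂⁺) + Ψ^{iso,−}(I₁⁻, I₂⁻) = Ψ^{iso}(I₁, I₂). -/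
open Matrix BigOperators

lemma trace_vecMulVec_mul {n : ℕ} (u v x y : Fin n → ℝ) :
    (vecMulVec u v * vecMulVec x y).trace = (v ⬝ᵥ x) * (y ⬝ᵥ u) := by
  simp only [Matrix.trace, Matrix.diag, Matrix.mul_apply, vecMulVec_apply, dotProduct,
    Finset.sum_mul, Finset.mul_sum]
  apply Finset.sum_congr rfl
  intro j _
  apply Finset.sum_congr rfl
  intro i _
  ring

lemma trace_sum_mul_sum {n : ℕ} (a b : Fin n → ℝ) (N : Fin n → (Fin n → ℝ))
    (hortho : ∀ i j, N i ⬝ᵥ N j = if i = j then (1 : ℝ) else 0) :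
    ((∑ i, a i • vecMulVec (N i) (N i)) * (∑ j, b j • vecMulVec (N j) (N j))).trace
      = ∑ i, a i * b i := by
  rw [Finset.sum_mul_sum]
  rw [Matrix.trace_sum]
  have : ∀ i ∈ Finset.univ, (∑ j, (a i • vecMulVec (N i) (N i)) * (b j • vecMulVec (N j) (N j))).trace
      = a i * b i := by
    intro i _
    rw [Matrix.trace_sum]
    have : ∀ j ∈ Finset.univ, ((a i • vecMulVec (N i) (N i)) * (b j • vecMulVec (N j) (N j))).trace
        = if i = j then a i * b i else 0 := by
      intro j _
      rw [Matrix.smul_mul, Matrix.mul_smul, Matrix.trace_smul, Matrix.trace_smul,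
        trace_vecMulVec_mul, hortho i j, hortho j i]
      by_cases h : i = j
      · simp [h]
      · simp [h, Ne.symm h]
    rw [Finset.sum_congr rfl this]
    simp
  rw [Finset.sum_congr rfl this]

lemma trace_sum_smul {n : ℕ} (a : Fin n → ℝ) (N : Fin n → (Fin n → ℝ))
    (hortho : ∀ i j, N i ⬝ᵥ N j = if i = j then (1 : ℝ) else 0) :
    (∑ i, a i • vecMulVec (N i) (N i)).trace = ∑ i, a i := by
  rw [Matrix.trace_sum]
  apply Finset.sum_congr rfl
  intro i _
  rw [Matrix.trace_smul]
  simp only [Matrix.trace, Matrix.diag]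
  have := hortho i i
  simp only [dotProduct, if_pos rfl] at this
  simp [vecMulVec_apply, this]

/-- The additively decomposed isotropic strain-energy function recovers the
total isotropic energy:
`Ψ^{iso,+}(I₁⁺, I₂⁺) + Ψ^{iso,−}(I₁⁻, I₂⁻) = Ψ^{iso}(I₁, I₂)`. -/
theorem strain_energy_tension_compression_decomposition
    {n : ℕ} (ε : Matrix (Fin n) (Fin n) ℝ) (hεsym : ε.IsSymm)
    (lam mu : ℝ)
    (μ : Fin n → ℝ) (N : Fin n → (Fin n → ℝ))
    (hortho : ∀ i j, N i ⬝ᵥ N j = if i = j then (1 : ℝ) else 0)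
    (hspec : ε = ∑ i, μ i • vecMulVec (N i) (N i)) :
    let εp : Matrix (Fin n) (Fin n) ℝ :=
      ∑ i, ((μ i + |μ i|) / 2) • vecMulVec (N i) (N i)
    let εm : Matrix (Fin n) (Fin n) ℝ :=
      ∑ i, ((μ i - |μ i|) / 2) • vecMulVec (N i) (N i)
    lam / 2 * ((ε.trace + |ε.trace|) / 2) ^ 2 + mu * (εp * εp).trace +
      (lam / 2 * ((ε.trace - |ε.trace|) / 2) ^ 2 + mu * (εm * εm).trace) =
      lam / 2 * ε.trace ^ 2 + mu * (ε * ε).trace := by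
  intro εp εm
  have hp : (εp * εp).trace = ∑ i, ((μ i + |μ i|) / 2) * ((μ i + |μ i|) / 2) :=
    trace_sum_mul_sum _ _ N hortho
  have hm : (εm * εm).trace = ∑ i, ((μ i - |μ i|) / 2) * ((μ i - |μ i|) / 2) :=
    trace_sum_mul_sum _ _ N hortho
  have he : (ε * ε).trace = ∑ i, μ i * μ i := by
    rw [hspec]; exact trace_sum_mul_sum _ _ N hortho
  have hsum : (∑ i, ((μ i + |μ i|) / 2) * ((μ i + |μ i|) / 2))
      + (∑ i, ((μ i - |μ i|) / 2) * ((μ i - |μ i|) / 2)) = ∑ i, μ i * μ i := by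
    rw [← Finset.sum_add_distrib]
    apply Finset.sum_congr rfl
    intro i _
    have := sq_abs (μ i)
    nlinarith [sq_abs (μ i)]
  have ht : |ε.trace| ^ 2 = ε.trace ^ 2 := sq_abs _
  rw [hp, hm, he]
  linear_combination mu * hsum + lam / 4 * ht
end
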